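/- Let λ = (λ_i^{(α)})_{i∈{1,…,n}, α∈R⁻} be any real vector, and assume the Tanner graph of H is connected (the bipartite graph on vertex set {u_1,…,u_n} ∪ {v_1,…,v_m} with an edge between u_i and v_j iff H_{j,i} ≠ 0 is connected). Suppose there exists an LP pseudocodeword (h, z) with h_i(α) ≠ 0 for some i ∈ {1,…,n} and some α ∈ R⁻, such that ∑_{i=1}^n ∑_{α∈R⁻} λ_i^{(α)} h_i(α) < 0. Then there exists a point (f, w) of the polytope Q with f ≠ 0 and λ·fᵀ = ∑_{i=1}^n ∑_{α∈R⁻} λ_i^{(α)} f_i^{(α)} < 0; in particular, the minimum of the cost over Q is strictly less than 0, which is the cost of the all-zero codeword point, so the LP decoder fails when the all-zero codeword is transmitted. -/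
import Mathlib


open Finset

/-- The tuple of sets `X_j(c)`: for each symbol `α`, the set of positions `i` in the
support of the `j`-th row of `H` where `c i = α`. -/
def Xj {R : Type} [Ring R] [DecidableEq R] {n m : ℕ} (H : Fin m → Fin n → R) (j : Fin m)
    (c : Fin n → R) : R → Finset (Fin n) :=
  fun α => univ.filter (fun i => H j i ≠ 0 ∧ c i = α)

/-- The set `E_j` of all tuples `X_j(c)` arising from words `c` satisfying parity check `j`. -/
def Ej {R : Type} [Ring R] [Fintype R] [DecidableEq R] {n m : ℕ} (H : Fin m → Fin n → R)
    (j : Fin m) : Finset (R → Finset (Fin n)) :=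
  (univ.filter (fun c : Fin n → R => ∑ i, H j i * c i = 0)).image (Xj H j)

/-- Membership in the relaxed LP polytope `Q`. -/
def MemQ {R : Type} [Ring R] [Fintype R] [DecidableEq R] {n m : ℕ} (H : Fin m → Fin n → R)
    (f : Fin n → R → ℝ) (w : Fin m → (R → Finset (Fin n)) → ℝ) : Prop :=
  (∀ j : Fin m, ∀ S ∈ Ej H j, 0 ≤ w j S ∧ w j S ≤ 1) ∧
  (∀ j : Fin m, ∑ S ∈ Ej H j, w j S = 1) ∧
  (∀ j : Fin m, ∀ i : Fin n, H j i ≠ 0 → ∀ α : R, α ≠ 0 →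
    f i α = ∑ S ∈ (Ej H j).filter (fun S => i ∈ S α), w j S)

/-- LP pseudocodeword: nonnegative integer vectors `(h, z)` satisfying the defining equations. -/
def IsLPPseudocodeword {R : Type} [Ring R] [Fintype R] [DecidableEq R] {n m : ℕ}
    (H : Fin m → Fin n → R) (h : Fin n → R → ℤ)
    (z : Fin m → (R → Finset (Fin n)) → ℤ) : Prop :=
  (∀ i α, 0 ≤ h i α) ∧
  (∀ j : Fin m, ∀ S ∈ Ej H j, 0 ≤ z j S) ∧
  (∀ j : Fin m, ∀ i : Fin n, H j i ≠ 0 →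
    (∀ α : R, α ≠ 0 → h i α = ∑ S ∈ (Ej H j).filter (fun S => i ∈ S α), z j S) ∧
    h i 0 = ∑ S ∈ (Ej H j).filter (fun S => ∀ α : R, α ≠ 0 → i ∉ S α), z j S)

/-- The embedding of a word `c ∈ Rⁿ` as the point `(ξ(c₁) | … | ξ(c_n))`
(indicator coordinates for the nonzero symbols). -/
def xiEmb {R : Type} [Zero R] [DecidableEq R] {n : ℕ} (c : Fin n → R) : Fin n → R → ℝ :=
  fun i α => if α ≠ 0 ∧ c i = α then 1 else 0

/-- The linear cost function `λ · fᵀ = ∑_i ∑_{α ∈ R⁻} λ_i^{(α)} f_i^{(α)}`. -/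
def costQ {R : Type} [Zero R] [Fintype R] [DecidableEq R] {n : ℕ}
    (lam f : Fin n → R → ℝ) : ℝ :=
  ∑ i, ∑ α ∈ univ.filter (fun α : R => α ≠ 0), lam i α * f i α

/-- Connectedness of the Tanner graph of `H`: the bipartite graph on
`{u_1,…,u_n} ∪ {v_1,…,v_m}` with `u_i ~ v_j` iff `H j i ≠ 0`. -/
def TannerConnected {R : Type} [Zero R] {n m : ℕ} (H : Fin m → Fin n → R) : Prop :=
  (SimpleGraph.fromRel (fun x y : Fin n ⊕ Fin m =>
      ∃ i j, x = Sum.inl i ∧ y = Sum.inr j ∧ H j i ≠ 0)).Connected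

/-- Graph-cover pseudocodeword for the `M`-cover specified by permutations `σ`. -/
def IsGCPseudocodeword {R : Type} [Ring R] [DecidableEq R] {n m : ℕ}
    (H : Fin m → Fin n → R) (M : ℕ) (σ : Fin m → Fin n → Equiv.Perm (Fin M))
    (p : Fin n → Fin M → R) : Prop :=
  ∀ (j : Fin m) (ℓ : Fin M),
    ∑ i ∈ univ.filter (fun i => H j i ≠ 0), H j i * p i (σ j i ℓ) = 0

section Aux

variable {R : Type} [Ring R] [Fintype R] [DecidableEq R] {n m : ℕ}

omit [Fintype R] in
lemma mem_Xj_iff (H : Fin m → Fin n → R) (j : Fin m) (c : Fin n → R) {i : Fin n}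
    (hji : H j i ≠ 0) (α : R) : i ∈ Xj H j c α ↔ c i = α := by
  simp [Xj, hji]

lemma sumz_fiber (H : Fin m → Fin n → R) (j : Fin m) (i : Fin n) (hji : H j i ≠ 0)
    (z : (R → Finset (Fin n)) → ℤ) :
    ∑ α : R, ∑ S ∈ (Ej H j).filter (fun S => i ∈ S α), z S = ∑ S ∈ Ej H j, z S := by
  simp only [Finset.sum_filter]
  rw [Finset.sum_comm]
  refine Finset.sum_congr rfl (fun S hS => ?_)
  obtain ⟨c, -, rfl⟩ := Finset.mem_image.1 hS
  simp only [mem_Xj_iff H j c hji]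
  rw [Finset.sum_ite_eq univ (c i) (fun _ => z (Xj H j c))]
  simp

lemma filter_zero (H : Fin m → Fin n → R) (j : Fin m) (i : Fin n) (hji : H j i ≠ 0) :
    (Ej H j).filter (fun S => ∀ α : R, α ≠ 0 → i ∉ S α)
      = (Ej H j).filter (fun S => i ∈ S 0) := by
  refine Finset.filter_congr (fun S hS => ?_)
  obtain ⟨c, -, rfl⟩ := Finset.mem_image.1 hS
  simp only [mem_Xj_iff H j c hji]
  constructor
  · intro hall
    by_contra hc0
    exact hall (c i) hc0 rfl
  · intro h0 α hα hc
    exact hα (hc ▸ h0)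

end Aux
/-- If the Tanner graph is connected and there is an LP pseudocodeword
`(h, z)` with `h` nonzero on `R⁻` and `∑_i ∑_{α∈R⁻} λ_i^{(α)} h_i(α) < 0`, then there
is a point `(f, w) ∈ Q` with `f ≠ 0` and cost `λ·fᵀ < 0` (so the LP decoder fails on
the all-zero codeword, whose point has cost `0`). -/
theorem stmt5 {R : Type} [Ring R] [Fintype R] [DecidableEq R] {n m : ℕ}
    (H : Fin m → Fin n → R) (lam : Fin n → R → ℝ)
    (hconn : TannerConnected H)
    (h : Fin n → R → ℤ) (z : Fin m → (R → Finset (Fin n)) → ℤ)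
    (hpc : IsLPPseudocodeword H h z)
    (hne : ∃ i : Fin n, ∃ α : R, α ≠ 0 ∧ h i α ≠ 0)
    (hcost : ∑ i, ∑ α ∈ univ.filter (fun α : R => α ≠ 0), lam i α * (h i α : ℝ) < 0) :
    ∃ (f : Fin n → R → ℝ) (w : Fin m → (R → Finset (Fin n)) → ℝ),
      MemQ H f w ∧ (∃ i : Fin n, ∃ α : R, α ≠ 0 ∧ f i α ≠ 0) ∧ costQ lam f < 0 := by
  obtain ⟨hh0, hz0, heq⟩ := hpc
  obtain ⟨i₀, α₀, hα₀, hi₀⟩ := hne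
  set N : ℤ := ∑ α : R, h i₀ α with hN
  have hNpos : 0 < N :=
    lt_of_lt_of_le (lt_of_le_of_ne (hh0 i₀ α₀) (Ne.symm hi₀))
      (Finset.single_le_sum (fun α _ => hh0 i₀ α) (Finset.mem_univ α₀))
  have hNR : (0 : ℝ) < (N : ℝ) := by exact_mod_cast hNpos
  have hNne : (N : ℝ) ≠ 0 := ne_of_gt hNR
  -- row sum lemma
  have hrow : ∀ (j : Fin m) (i : Fin n), H j i ≠ 0 →
      ∑ α : R, h i α = ∑ S ∈ Ej H j, z j S := by
    intro j i hji
    obtain ⟨h1, h2⟩ := heq j i hji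
    rw [← sumz_fiber H j i hji (z j)]
    rw [← Finset.sum_filter_add_sum_filter_not univ (fun α : R => α = 0)
        (fun α => h i α),
      ← Finset.sum_filter_add_sum_filter_not univ (fun α : R => α = 0)
        (fun α => ∑ S ∈ (Ej H j).filter (fun S => i ∈ S α), z j S)]
    congr 1
    · rw [Finset.filter_eq' univ (0 : R)]
      simp only [Finset.mem_univ, if_true, Finset.sum_singleton]
      rw [h2, filter_zero H j i hji]
    · refine Finset.sum_congr rfl (fun α hα => ?_)
      exact h1 α (Finset.mem_filter.1 hα).2
  -- constancy along the Tanner graph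
  unfold TannerConnected at hconn
  have hkey : ∀ x y : Fin n ⊕ Fin m,
      (SimpleGraph.fromRel (fun x y : Fin n ⊕ Fin m =>
        ∃ i j, x = Sum.inl i ∧ y = Sum.inr j ∧ H j i ≠ 0)).Walk x y →
      Sum.elim (fun i => ∑ α : R, h i α) (fun j' => ∑ S ∈ Ej H j', z j' S) x
        = Sum.elim (fun i => ∑ α : R, h i α) (fun j' => ∑ S ∈ Ej H j', z j' S) y := by
    intro x y p
    induction p with
    | nil => rfl
    | cons ha p ih =>
      refine Eq.trans ?_ ih
      rw [SimpleGraph.fromRel_adj] at ha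
      obtain ⟨-, ⟨i, j, rfl, rfl, hji⟩ | ⟨i, j, rfl, rfl, hji⟩⟩ := ha
      · exact hrow j i hji
      · exact (hrow j i hji).symm
  have hVi : ∀ i : Fin n, ∑ α : R, h i α = N := by
    intro i
    obtain ⟨p⟩ := hconn.preconnected (Sum.inl i) (Sum.inl i₀)
    exact hkey _ _ p
  have hVj : ∀ j : Fin m, ∑ S ∈ Ej H j, z j S = N := by
    intro j
    obtain ⟨p⟩ := hconn.preconnected (Sum.inr j) (Sum.inl i₀)
    exact hkey _ _ p
  refine ⟨fun i α => (h i α : ℝ) / N, fun j S => (z j S : ℝ) / N, ⟨?_, ?_, ?_⟩, ?_, ?_⟩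
  · intro j S hS
    constructor
    · exact div_nonneg (by exact_mod_cast hz0 j S hS) hNR.le
    · rw [div_le_one hNR]
      have := Finset.single_le_sum (f := fun S => z j S) (fun S hS => hz0 j S hS) hS
      rw [hVj j] at this
      exact_mod_cast this
  · intro j
    rw [← Finset.sum_div]
    rw [div_eq_one_iff_eq hNne]
    exact_mod_cast hVj j
  · intro j i hji α hα
    simp only []; rw [← Finset.sum_div]
    congr 1
    exact_mod_cast (heq j i hji).1 α hα
  · exact ⟨i₀, α₀, hα₀, div_ne_zero (by exact_mod_cast hi₀) hNne⟩
  · unfold costQ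
    have : ∑ i, ∑ α ∈ univ.filter (fun α : R => α ≠ 0), lam i α * ((h i α : ℝ) / N)
        = (∑ i, ∑ α ∈ univ.filter (fun α : R => α ≠ 0), lam i α * (h i α : ℝ)) / N := by
      rw [Finset.sum_div]
      refine Finset.sum_congr rfl (fun i _ => ?_)
      rw [Finset.sum_div]
      exact Finset.sum_congr rfl (fun α _ => by ring)
    rw [this]
    exact div_neg_of_neg_of_pos hcost hNR
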